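/- Let Φ be a cellular automaton of radius R with Φ(𝔄) = 𝔄, let λ = (λ₀;λ₁,…,λ_D) be a rational eigenvalue with locally determined eigenfunction f satisfying f∘Φ = λ₀ f, and let a ∈ 𝔄~ with a' = Φ(a). If y, z ∈ Y_{r+R}(a) (so that y, z ∈ Y_r(a')), then λ^{y−z}·f_z(a)/f_y(a) = λ^{y−z}·f_z(a')/f_y(a'). Hence the displacement of a dislocation is invariant under Φ. -/

import Mathlib

open Topology MeasureTheory

/-- The configuration space `A^(ℤ^D)`, modelled as functions `(Fin D → ℤ) → A`. -/
abbrev Config (A : Type*) (D : ℕ) := (Fin D → ℤ) → A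

/-- Sup-norm of a lattice point `z ∈ ℤ^D`. -/
def normZ {D : ℕ} (z : Fin D → ℤ) : ℕ :=
  Finset.univ.sup fun i => (z i).natAbs

/-- The shift action: `(shift v a) z = a (z + v)`. -/
def shift {A : Type*} {D : ℕ} (v : Fin D → ℤ) (a : Config A D) : Config A D :=
  fun z => a (z + v)

/-- A subshift: a closed, shift-invariant subset of `A^(ℤ^D)`. -/
def IsSubshift {A : Type*} {D : ℕ} [TopologicalSpace A] (S : Set (Config A D)) : Prop :=
  IsClosed S ∧ ∀ v : Fin D → ℤ, shift v '' S = S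

/-- A cellular automaton of radius `r`: shift-commuting and locally determined
with radius `r`. -/
def IsCA {A : Type*} {D : ℕ} (Φ : Config A D → Config A D) (r : ℕ) : Prop :=
  (∀ (v : Fin D → ℤ) (a : Config A D), Φ (shift v a) = shift v (Φ a)) ∧
  ∀ (a b : Config A D) (z : Fin D → ℤ),
    (∀ w, normZ w ≤ r → a (z + w) = b (z + w)) → Φ a z = Φ b z

/-- The defect field `F_a(z)`: the largest radius `r` such that `a` restricted to
the ball `B(z,r)` agrees with (a translate of) some element of `S`. -/
noncomputable def defectField {A : Type*} {D : ℕ} (S : Set (Config A D))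
    (a : Config A D) (z : Fin D → ℤ) : ℕ∞ :=
  ⨆ (r : ℕ) (_ : ∃ b ∈ S, ∀ w, normZ w ≤ r → b (z + w) = a (z + w)), (r : ℕ∞)

/-- `𝔄~` : configurations with unbounded defect field. -/
def tildeSet {A : Type*} {D : ℕ} (S : Set (Config A D)) : Set (Config A D) :=
  {a | (⨆ z, defectField S a z) = ⊤}

/-- `Y_r(a) = { z : F_a(z) ≥ r }`, the non-defective region of range `r`. -/
def Yset {A : Type*} {D : ℕ} (S : Set (Config A D)) (a : Config A D) (r : ℕ) :
    Set (Fin D → ℤ) :=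
  {z | (r : ℕ∞) ≤ defectField S a z}

/-- `y` and `z` are connected by a trail inside `Y` (adjacency = sup-distance 1). -/
def TrailConn {D : ℕ} (Y : Set (Fin D → ℤ)) (y z : Fin D → ℤ) : Prop :=
  y ∈ Y ∧ Relation.ReflTransGen (fun p q => q ∈ Y ∧ normZ (q - p) = 1) y z

/-- A defect of `a` is removable if it can be erased by modifying `a` only near
the defective region. -/
def Removable {A : Type*} {D : ℕ} (S : Set (Config A D)) (a : Config A D) : Prop :=
  ∃ r : ℕ, 0 < r ∧ ∃ a' ∈ S, ∀ z ∈ Yset S a r, a' z = a z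

/-- The trail-connected component of `y` in `Y_r(a)` is projective: it meets
`Y_R(a)` for every `R`. -/
def Projective {A : Type*} {D : ℕ} (S : Set (Config A D)) (a : Config A D)
    (r : ℕ) (y : Fin D → ℤ) : Prop :=
  y ∈ Yset S a r ∧
    ∀ R : ℕ, ∃ w, TrailConn (Yset S a r) y w ∧ (R : ℕ∞) ≤ defectField S a w

/-- `λ^z = λ₁^{z₁} ⋯ λ_D^{z_D}`. -/
noncomputable def prodPow {D : ℕ} (l : Fin D → ℂ) (v : Fin D → ℤ) : ℂ :=
  ∏ i, l i ^ (v i)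

/-- A continuous `(Φ,σ)`-eigenfunction on `S` with generalized eigenvalue `(l0; l)`. -/
def IsEigenFun {A : Type*} {D : ℕ} [TopologicalSpace A] (S : Set (Config A D))
    (Φ : Config A D → Config A D) (l0 : ℂ) (l : Fin D → ℂ)
    (f : Config A D → ℂ) : Prop :=
  ContinuousOn f S ∧ (∃ a ∈ S, f a ≠ 0) ∧
  (∀ a ∈ S, f (Φ a) = l0 * f a) ∧
  ∀ a ∈ S, ∀ v : Fin D → ℤ, f (shift v a) = prodPow l v * f a

/-- The set `Spec(𝔄,Φ,σ)` of generalized eigenvalues (in the torus `𝕋^{D+1}`). -/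
def Spec' {A : Type*} {D : ℕ} [TopologicalSpace A] (S : Set (Config A D))
    (Φ : Config A D → Config A D) : Set (ℂ × (Fin D → ℂ)) :=
  {p | ‖p.1‖ = 1 ∧ (∀ i, ‖p.2 i‖ = 1) ∧
       ∃ f, IsEigenFun S Φ p.1 p.2 f}

/-- A continuous `σ`-eigenfunction on `S`. -/
def IsShiftEigenFun {A : Type*} {D : ℕ} [TopologicalSpace A] (S : Set (Config A D))
    (l : Fin D → ℂ) (f : Config A D → ℂ) : Prop :=
  ContinuousOn f S ∧ (∃ a ∈ S, f a ≠ 0) ∧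
  ∀ a ∈ S, ∀ v : Fin D → ℤ, f (shift v a) = prodPow l v * f a

/-- The group `Spec(𝔄,σ)` of shift eigenvalues. -/
def SpecSigma {A : Type*} {D : ℕ} [TopologicalSpace A] (S : Set (Config A D)) :
    Set (Fin D → ℂ) :=
  {l | (∀ i, ‖l i‖ = 1) ∧ ∃ f, IsShiftEigenFun S l f}

/-- Displacement `γ_{x,z}(λ) = λ^{x−z} f_z(a) / f_x(a)` of a dislocation. -/
noncomputable def disp {A : Type*} {D : ℕ} (l : Fin D → ℂ) (f : Config A D → ℂ)
    (a : Config A D) (x z : Fin D → ℤ) : ℂ :=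
  prodPow l (x - z) * f (shift z a) / f (shift x a)

/-- `C` is comeager relative to the subspace `S`. -/
def ComeagerIn {A : Type*} {D : ℕ} [TopologicalSpace A] (S C : Set (Config A D)) : Prop :=
  {x : S | (x : Config A D) ∈ C} ∈ residual S

/-- An a.e.-continuous (Baire-generically continuous), bounded, a.e.-nonzero
eigenfunction with eigenvalue `(l0; l)`, all equations holding comeagerly. -/
def IsAEEigenFun {A : Type*} {D : ℕ} [TopologicalSpace A] (S : Set (Config A D))
    (Φ : Config A D → Config A D) (l0 : ℂ) (l : Fin D → ℂ)
    (f : Config A D → ℂ) : Prop :=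
  (∃ M : ℝ, ∀ a ∈ S, ‖f a‖ ≤ M) ∧
  ComeagerIn S {a | ContinuousWithinAt f S a} ∧
  (¬ ComeagerIn S {a | f a = 0}) ∧
  ComeagerIn S {a | f (Φ a) = l0 * f a} ∧
  ∀ v : Fin D → ℤ, ComeagerIn S {a | f (shift v a) = prodPow l v * f a}

/-- The set `Spec_ae(𝔄,Φ,σ)` of a.e.-eigenvalues. -/
def SpecAE {A : Type*} {D : ℕ} [TopologicalSpace A] (S : Set (Config A D))
    (Φ : Config A D → Config A D) : Set (ℂ × (Fin D → ℂ)) :=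
  {p | ‖p.1‖ = 1 ∧ (∀ i, ‖p.2 i‖ = 1) ∧
       ∃ f, IsAEEigenFun S Φ p.1 p.2 f}

lemma normZ_add_le {D : ℕ} (w w' : Fin D → ℤ) :
    normZ (w + w') ≤ normZ w + normZ w' := by
  apply Finset.sup_le
  intro i _
  calc ((w + w') i).natAbs = (w i + w' i).natAbs := rfl
    _ ≤ (w i).natAbs + (w' i).natAbs := Int.natAbs_add_le _ _
    _ ≤ normZ w + normZ w' :=
        add_le_add (Finset.le_sup (f := fun i => (w i).natAbs) (Finset.mem_univ i))
          (Finset.le_sup (f := fun i => (w' i).natAbs) (Finset.mem_univ i))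

lemma Yset_witness {A : Type*} {D : ℕ} (S : Set (Config A D)) (a : Config A D)
    (m : ℕ) (hm : 0 < m) (z : Fin D → ℤ) (hz : z ∈ Yset S a m) :
    ∃ b ∈ S, ∀ w, normZ w ≤ m → b (z + w) = a (z + w) := by
  by_contra h
  push_neg at h
  have hle : defectField S a z ≤ ((m - 1 : ℕ) : ℕ∞) := by
    apply iSup₂_le
    intro r hr
    obtain ⟨b, hbS, hb⟩ := hr
    by_cases hrm : m ≤ r
    · obtain ⟨w, hw, hne⟩ := h b hbS
      exact absurd (hb w (hw.trans hrm)) hne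
    · push_neg at hrm
      exact_mod_cast Nat.le_sub_one_of_lt hrm
  have := hz.trans hle
  have : m ≤ m - 1 := by exact_mod_cast this
  omega

/-- the displacement of a dislocation is invariant under `Φ`:
`λ^{y−z} f_z(a)/f_y(a) = λ^{y−z} f_z(Φa)/f_y(Φa)` for `y,z ∈ Y_{r+R}(a)`. -/
theorem displacement_Phi_invariant {A : Type*} {D : ℕ} [Fintype A]
    [TopologicalSpace A] [DiscreteTopology A]
    (Φ : Config A D → Config A D) (R : ℕ) (hΦ : IsCA Φ R)
    (S : Set (Config A D)) (hS : IsSubshift S) (himg : Φ '' S = S)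
    (l0 : ℂ) (l : Fin D → ℂ) (hl0 : ‖l0‖ = 1)
    (hrat : (∃ n : ℕ, 0 < n ∧ l0 ^ n = 1) ∧ ∀ i, ∃ n : ℕ, 0 < n ∧ (l i) ^ n = 1)
    (f : Config A D → ℂ) (heig : IsEigenFun S Φ l0 l f)
    (r' : ℕ)
    (hloc : ∀ a b : Config A D, (∀ w, normZ w ≤ r' → a w = b w) → f a = f b)
    (hmod : ∀ a ∈ S, ‖f a‖ = 1)
    (a : Config A D) (ha : a ∈ tildeSet S)
    (r : ℕ) (hr : r' + 1 ≤ r)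
    (y z : Fin D → ℤ)
    (hy : y ∈ Yset S a (r + R)) (hz : z ∈ Yset S a (r + R)) :
    prodPow l (y - z) * f (shift z a) / f (shift y a) =
      prodPow l (y - z) * f (shift z (Φ a)) / f (shift y (Φ a)) := by
  obtain ⟨hcomm, hlocΦ⟩ := hΦ
  obtain ⟨_, _, hPhiEig, _⟩ := heig
  -- key claim: for x ∈ Y_{r+R}(a), f_x(Φa) = l0 * f_x(a), f_x(a) = f(b-shifted) with b ∈ S
  have key : ∀ x ∈ Yset S a (r + R),
      f (shift x (Φ a)) = l0 * f (shift x a) ∧ ‖f (shift x a)‖ = 1 := by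
    intro x hx
    obtain ⟨b, hbS, hb⟩ := Yset_witness S a (r + R) (by omega) x hx
    have hshiftb : shift x b ∈ S := by
      rw [← (hS.2 x)]; exact ⟨b, hbS, rfl⟩
    have hfa : f (shift x a) = f (shift x b) := by
      refine (hloc _ _ fun w hw => ?_).symm
      show b (w + x) = a (w + x)
      rw [add_comm w x]
      exact hb w (by omega)
    have hfPhi : f (shift x (Φ a)) = f (shift x (Φ b)) := by
      refine (hloc _ _ fun w hw => ?_).symm
      show Φ b (w + x) = Φ a (w + x)
      apply hlocΦ
      intro w' hw'
      have : (w + x) + w' = x + (w + w') := by ring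
      rw [this, add_comm w w']
      refine hb (w' + w) ((normZ_add_le w' w).trans ?_)
      omega
    rw [hfa, hfPhi, ← hcomm x b, hPhiEig _ hshiftb]
    exact ⟨rfl, hmod _ hshiftb⟩
  obtain ⟨hy1, hy2⟩ := key y hy
  obtain ⟨hz1, hz2⟩ := key z hz
  have hl0ne : l0 ≠ 0 := by
    intro h; rw [h] at hl0; simp at hl0
  rw [hy1, hz1, mul_div_assoc, mul_div_assoc, mul_div_mul_left _ _ hl0ne]
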